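/- For any family C of K-element subsets of {1,...,n}, the Bayes risk satisfies R* ≥ 1/2 whenever μ ≤ √((4/K)·log(4/3)). -/

import Mathlib

open MeasureTheory Real Finset ProbabilityTheory
open scoped ENNReal NNReal

set_option maxHeartbeats 1000000

lemma gauss1_aux (c x : ℝ) :
    gaussianPDFReal 0 1 x * Real.exp (c * x)
      = Real.exp (c ^ 2 / 2) * gaussianPDFReal c 1 x := by
  simp only [gaussianPDFReal, NNReal.coe_one, mul_one, sub_zero]
  rw [mul_assoc, ← Real.exp_add, mul_left_comm, ← Real.exp_add]
  congr 1
  ring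

lemma gauss1 (c : ℝ) :
    Integrable (fun x => Real.exp (c * x)) (gaussianReal 0 1) ∧
    ∫ x, Real.exp (c * x) ∂(gaussianReal 0 1) = Real.exp (c ^ 2 / 2) := by
  have hf : Measurable fun x => (gaussianPDFReal 0 1 x).toNNReal :=
    (measurable_gaussianPDFReal 0 1).real_toNNReal
  have hμ : gaussianReal 0 1
      = volume.withDensity (fun x => ((gaussianPDFReal 0 1 x).toNNReal : ℝ≥0∞)) := by
    rw [gaussianReal_of_var_ne_zero 0 one_ne_zero]; rfl
  have hpt : ∀ x : ℝ, (gaussianPDFReal 0 1 x).toNNReal • Real.exp (c * x)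
      = Real.exp (c ^ 2 / 2) * gaussianPDFReal c 1 x := by
    intro x
    rw [NNReal.smul_def, smul_eq_mul,
      Real.coe_toNNReal _ (gaussianPDFReal_nonneg 0 1 x), gauss1_aux]
  constructor
  · rw [hμ, integrable_withDensity_iff_integrable_smul hf]
    exact ((integrable_gaussianPDFReal c 1).const_mul _).congr
      (Filter.Eventually.of_forall fun x => (hpt x).symm)
  · rw [hμ, integral_withDensity_eq_integral_smul hf]
    simp_rw [hpt]
    rw [integral_const_mul, integral_gaussianPDFReal_eq_one c one_ne_zero, mul_one]

lemma pi_integral {ι : Type*} [Fintype ι] (m : Measure ℝ) [SigmaFinite m] (f : ι → ℝ → ℝ) :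
    ∫ x : ι → ℝ, ∏ i, f i (x i) ∂(Measure.pi fun _ => m) = ∏ i, ∫ x, f i x ∂m := by
  letI : MeasureSpace ℝ := ⟨m⟩
  exact MeasureTheory.integral_fintype_prod_eq_prod f

lemma pi_integrable {ι : Type*} [Fintype ι] (m : Measure ℝ) [SigmaFinite m] (f : ι → ℝ → ℝ)
    (hf : ∀ i, Integrable (f i) m) :
    Integrable (fun x : ι → ℝ => ∏ i, f i (x i)) (Measure.pi fun _ => m) := by
  letI : MeasureSpace ℝ := ⟨m⟩
  exact Integrable.fintype_prod hf

lemma gauss_key (n : ℕ) (c : ℝ) (S : Finset (Fin n)) :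
    Integrable (fun x : Fin n → ℝ => Real.exp (c * ∑ i ∈ S, x i))
      (Measure.pi fun _ => gaussianReal 0 1) ∧
    ∫ x : Fin n → ℝ, Real.exp (c * ∑ i ∈ S, x i) ∂(Measure.pi fun _ => gaussianReal 0 1)
      = Real.exp (S.card * c ^ 2 / 2) := by
  have hfun : ∀ x : Fin n → ℝ, Real.exp (c * ∑ i ∈ S, x i)
      = ∏ i : Fin n, (if i ∈ S then Real.exp (c * x i) else 1) := by
    intro x
    rw [Finset.prod_ite_mem, Finset.univ_inter, Finset.mul_sum, Real.exp_sum]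
  have h1 : ∀ i : Fin n,
      Integrable (fun t : ℝ => if i ∈ S then Real.exp (c * t) else 1) (gaussianReal 0 1) := by
    intro i
    by_cases h : i ∈ S <;> simp [h, (gauss1 c).1]
  constructor
  · have := pi_integrable (gaussianReal 0 1)
      (fun i (t : ℝ) => if i ∈ S then Real.exp (c * t) else 1) h1
    exact this.congr (Filter.Eventually.of_forall fun x => (hfun x).symm)
  · simp_rw [hfun]
    rw [show (∫ x : Fin n → ℝ, ∏ i : Fin n, (if i ∈ S then Real.exp (c * x i) else 1)
          ∂(Measure.pi fun _ => gaussianReal 0 1))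
        = ∏ i : Fin n, ∫ t, (if i ∈ S then Real.exp (c * t) else 1) ∂(gaussianReal 0 1) from
      pi_integral (gaussianReal 0 1) fun i t => if i ∈ S then Real.exp (c * t) else 1]
    have h2 : ∀ i : Fin n, ∫ t, (if i ∈ S then Real.exp (c * t) else 1) ∂(gaussianReal 0 1)
        = if i ∈ S then Real.exp (c ^ 2 / 2) else 1 := by
      intro i
      by_cases h : i ∈ S <;> simp [h, (gauss1 c).2]
    rw [Finset.prod_congr rfl fun i _ => h2 i, Finset.prod_ite_mem, Finset.univ_inter,
      Finset.prod_const, ← Real.exp_nat_mul]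
    congr 1
    ring

lemma amgm_aux (s a b : ℝ) (hs : s^2 = 3) (hs0 : 0 ≤ s) (_hb : 0 ≤ b) :
    a * b ≤ ((2+s)*a^2 + (2-s)*b^2)/2 := by
  have huv : (2+s)*(2-s) = 1 := by linear_combination -hs
  have key : (2+s)*(a - (2-s)*b)^2 = (2+s)*a^2 - 2*a*b + (2-s)*b^2 := by
    linear_combination ((2-s)*b^2 - 2*a*b) * huv
  have hpos := mul_nonneg (by linarith : (0:ℝ) ≤ 2+s) (sq_nonneg (a - (2-s)*b))
  rw [key] at hpos
  linarith

/-- For any family `C` of `K`-element subsets of `{1,...,n}`, the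
Bayes risk `R* = 1 - (1/2) E₀|L(X) - 1|` satisfies `R* ≥ 1/2` whenever
`μ ≤ √((4/K)·log(4/3))`. -/
theorem stmt9 (n K : ℕ) (hK : 0 < K) (μ : ℝ) (hμ : 0 < μ)
    (C : Finset (Finset (Fin n))) (hC : C.Nonempty) (hcard : ∀ S ∈ C, S.card = K)
    (P₀ : Measure (Fin n → ℝ))
    (hP₀ : P₀ = Measure.pi fun _ : Fin n => gaussianReal 0 1)
    (L : (Fin n → ℝ) → ℝ)
    (hL : ∀ x, L x = (1 / (C.card : ℝ)) *
      ∑ S ∈ C, Real.exp (μ * (∑ i ∈ S, x i) - K * μ^2 / 2))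
    (hμsmall : μ ≤ Real.sqrt ((4 / (K : ℝ)) * Real.log (4/3))) :
    (1 : ℝ)/2 ≤ 1 - (1/2) * ∫ x, |L x - 1| ∂P₀ := by
  subst hP₀
  set ν : Measure (Fin n → ℝ) := Measure.pi fun _ : Fin n => gaussianReal 0 1 with hν
  have hprob : IsProbabilityMeasure ν := by rw [hν]; infer_instance
  clear_value ν
  set N : ℝ := (C.card : ℝ) with hNdef
  have hN : 0 < N := by rw [hNdef]; exact_mod_cast Finset.card_pos.mpr hC
  clear_value N
  have hKpos : (0 : ℝ) < K := by exact_mod_cast hK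
  have hlog : 0 ≤ Real.log (4/3) := Real.log_nonneg (by norm_num)
  -- the likelihood components and their square roots
  set g : Finset (Fin n) → (Fin n → ℝ) → ℝ :=
    fun S x => Real.exp (μ * (∑ i ∈ S, x i) - K * μ^2 / 2) with hg
  set s : Finset (Fin n) → (Fin n → ℝ) → ℝ :=
    fun S x => Real.exp (μ/2 * (∑ i ∈ S, x i) - K * μ^2 / 4) with hs
  have hgsplit : ∀ S x, g S x
      = Real.exp (-(K * μ^2 / 2)) * Real.exp (μ * ∑ i ∈ S, x i) := by
    intro S x; simp only [hg]; rw [← Real.exp_add]; congr 1; ring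
  have hssplit : ∀ S x, s S x
      = Real.exp (-(K * μ^2 / 4)) * Real.exp (μ/2 * ∑ i ∈ S, x i) := by
    intro S x; simp only [hs]; rw [← Real.exp_add]; congr 1; ring
  have hgint : ∀ S ∈ C, Integrable (g S) ν := by
    intro S _
    rw [hν]
    have := ((gauss_key n μ S).1).const_mul (Real.exp (-(K * μ^2 / 2)))
    exact this.congr (Filter.Eventually.of_forall fun x => (hgsplit S x).symm)
  have hsint : ∀ S ∈ C, Integrable (s S) ν := by
    intro S _
    rw [hν]
    have := ((gauss_key n (μ/2) S).1).const_mul (Real.exp (-(K * μ^2 / 4)))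
    exact this.congr (Filter.Eventually.of_forall fun x => (hssplit S x).symm)
  have hgeq : ∀ S ∈ C, ∫ x, g S x ∂ν = 1 := by
    intro S hS
    calc ∫ x, g S x ∂ν
        = Real.exp (-(K * μ^2 / 2)) * ∫ x, Real.exp (μ * ∑ i ∈ S, x i) ∂ν := by
          simp_rw [hgsplit]; rw [integral_const_mul]
      _ = 1 := by
          rw [hν, (gauss_key n μ S).2, hcard S hS, ← Real.exp_add]
          rw [show -((K : ℝ) * μ^2 / 2) + (K : ℝ) * μ^2 / 2 = 0 by ring, Real.exp_zero]
  have hseq : ∀ S ∈ C, ∫ x, s S x ∂ν = Real.exp (-(K * μ^2 / 8)) := by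
    intro S hS
    calc ∫ x, s S x ∂ν
        = Real.exp (-(K * μ^2 / 4)) * ∫ x, Real.exp (μ/2 * ∑ i ∈ S, x i) ∂ν := by
          simp_rw [hssplit]; rw [integral_const_mul]
      _ = Real.exp (-(K * μ^2 / 8)) := by
          rw [hν, (gauss_key n (μ/2) S).2, hcard S hS, ← Real.exp_add]
          congr 1
          ring
  -- basic properties of L
  have hLfun : L = fun x => (1/N) * ∑ S ∈ C, g S x := funext fun x => hL x
  have hLpos : ∀ x, 0 < L x := by
    intro x
    simp only [hLfun]
    exact mul_pos (by positivity) (Finset.sum_pos (fun S _ => Real.exp_pos _) hC)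
  have hLint : Integrable L ν := by
    rw [hLfun]
    exact (integrable_finset_sum C hgint).const_mul _
  have hLeq : ∫ x, L x ∂ν = 1 := by
    simp only [hLfun]
    rw [integral_const_mul, integral_finset_sum C hgint,
      Finset.sum_congr rfl hgeq, Finset.sum_const, nsmul_eq_mul, mul_one, ← hNdef]
    field_simp
  have hLmeas : Measurable L := by
    rw [hLfun]
    exact measurable_const.mul (Finset.measurable_sum C fun S _ =>
      (((Finset.measurable_sum S fun i _ => measurable_pi_apply i).const_mul μ).sub
        measurable_const).exp)
  -- r = sqrt L
  set r : (Fin n → ℝ) → ℝ := fun x => Real.sqrt (L x) with hrdef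
  have hr0 : ∀ x, 0 ≤ r x := fun x => Real.sqrt_nonneg _
  have hr2 : ∀ x, r x ^ 2 = L x := fun x => Real.sq_sqrt (hLpos x).le
  have hrmeas : Measurable r := Real.continuous_sqrt.measurable.comp hLmeas
  have hrx : ∀ x, r x = Real.sqrt (L x) := fun x => by rw [hrdef]
  clear_value r
  have hrint : Integrable r ν := by
    have hgbd : Integrable (fun x => L x + 1) ν := hLint.add (integrable_const 1)
    refine hgbd.mono' hrmeas.aestronglyMeasurable
      (Filter.Eventually.of_forall fun x => ?_)
    rw [Real.norm_eq_abs, abs_of_nonneg (hr0 x)]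
    nlinarith [sq_nonneg (r x - 1), hr2 x, hr0 x, (hLpos x).le]
  -- lower bound on sqrt L by averaging
  have hMle : ∀ x, (1/N) * ∑ S ∈ C, s S x ≤ r x := by
    intro x
    have hs2 : ∀ S, s S x ^ 2 = g S x := by
      intro S; simp only [hs, hg]; rw [sq, ← Real.exp_add]; congr 1; ring
    have hcs := Finset.sum_mul_sq_le_sq_mul_sq C (fun _ => (1:ℝ)) (fun S => s S x)
    simp only [one_mul, one_pow, Finset.sum_const, nsmul_eq_mul, mul_one] at hcs
    rw [← hNdef] at hcs
    have hM0 : 0 ≤ (1/N) * ∑ S ∈ C, s S x :=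
      mul_nonneg (by positivity) (Finset.sum_nonneg fun S _ => (Real.exp_pos _).le)
    have hMsq : ((1/N) * ∑ S ∈ C, s S x) ^ 2 ≤ L x := by
      simp only [hLfun]
      have h2 : ∑ S ∈ C, s S x ^ 2 = ∑ S ∈ C, g S x := Finset.sum_congr rfl fun S _ => hs2 S
      rw [h2] at hcs
      have : ((1/N) * ∑ S ∈ C, s S x) ^ 2 = (1/N)^2 * (∑ S ∈ C, s S x)^2 := by ring
      rw [this]
      calc (1/N)^2 * (∑ S ∈ C, s S x)^2 ≤ (1/N)^2 * (N * ∑ S ∈ C, g S x) := by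
            apply mul_le_mul_of_nonneg_left _ (by positivity)
            exact hcs
        _ = (1/N) * ∑ S ∈ C, g S x := by field_simp
    calc (1/N) * ∑ S ∈ C, s S x
        = Real.sqrt (((1/N) * ∑ S ∈ C, s S x) ^ 2) := (Real.sqrt_sq hM0).symm
      _ ≤ r x := by rw [hrx x]; exact Real.sqrt_le_sqrt hMsq
  have hMint : Integrable (fun x => (1/N) * ∑ S ∈ C, s S x) ν :=
    (integrable_finset_sum C hsint).const_mul _
  have hMeq : ∫ x, (1/N) * ∑ S ∈ C, s S x ∂ν = Real.exp (-(K * μ^2 / 8)) := by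
    rw [integral_const_mul, integral_finset_sum C hsint, Finset.sum_congr rfl hseq,
      Finset.sum_const, nsmul_eq_mul, ← hNdef]
    field_simp
  set ρ : ℝ := ∫ x, r x ∂ν with hρdef
  clear_value ρ
  have hρge : Real.exp (-(K * μ^2 / 8)) ≤ ρ := by
    rw [hρdef, ← hMeq]
    exact integral_mono hMint hrint hMle
  -- lower bound exp(-Kμ²/8) ≥ √3/2
  have hA : 0 ≤ 4 / (K : ℝ) * Real.log (4/3) := by positivity
  have hμ2 : μ ^ 2 ≤ 4 / (K : ℝ) * Real.log (4/3) := by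
    nlinarith [Real.sq_sqrt hA, Real.sqrt_nonneg (4 / (K : ℝ) * Real.log (4/3)), hμsmall, hμ.le]
  have hexplb : (3:ℝ)/4 ≤ Real.exp (-(K * μ^2 / 8)) ^ 2 := by
    rw [sq, ← Real.exp_add]
    calc (3:ℝ)/4 = Real.exp (Real.log (3/4)) := (Real.exp_log (by norm_num)).symm
      _ ≤ Real.exp (-(K * μ^2 / 8) + -(K * μ^2 / 8)) := by
          apply Real.exp_le_exp.mpr
          rw [show (3:ℝ)/4 = ((4:ℝ)/3)⁻¹ by norm_num, Real.log_inv]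
          have : (K : ℝ) * μ^2 ≤ 4 * Real.log (4/3) := by
            calc (K : ℝ) * μ^2 ≤ (K : ℝ) * (4 / (K : ℝ) * Real.log (4/3)) := by
                  exact mul_le_mul_of_nonneg_left hμ2 hKpos.le
              _ = 4 * Real.log (4/3) := by field_simp
          linarith
  have hρsqrt : Real.sqrt 3 / 2 ≤ ρ := by
    have hEpos := Real.exp_pos (-(K * μ^2 / 8))
    have h3 : (3:ℝ) ≤ (2 * Real.exp (-(K * μ^2 / 8))) ^ 2 := by nlinarith
    have : Real.sqrt 3 ≤ 2 * Real.exp (-(K * μ^2 / 8)) := by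
      calc Real.sqrt 3 ≤ Real.sqrt ((2 * Real.exp (-(K * μ^2 / 8))) ^ 2) :=
            Real.sqrt_le_sqrt h3
        _ = 2 * Real.exp (-(K * μ^2 / 8)) := Real.sqrt_sq (by positivity)
    linarith
  -- integrals of (r ± 1)²
  have hsub : ∀ x, (r x - 1)^2 = L x - 2 * r x + 1 := by
    intro x; rw [sub_sq, hr2 x]; ring
  have hadd : ∀ x, (r x + 1)^2 = L x + 2 * r x + 1 := by
    intro x; rw [add_sq, hr2 x]; ring
  have hisub : Integrable (fun x => L x - 2 * r x) ν := hLint.sub (hrint.const_mul 2)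
  have hiadd : Integrable (fun x => L x + 2 * r x) ν := hLint.add (hrint.const_mul 2)
  have hint1 : Integrable (fun x => (r x - 1)^2) ν := by
    simp_rw [hsub]
    exact hisub.add (integrable_const 1)
  have hint2 : Integrable (fun x => (r x + 1)^2) ν := by
    simp_rw [hadd]
    exact hiadd.add (integrable_const 1)
  have heq1 : ∫ x, (r x - 1)^2 ∂ν = 2 - 2 * ρ := by
    simp_rw [hsub]
    rw [integral_add hisub (integrable_const 1),
      integral_sub hLint (hrint.const_mul 2), integral_const_mul, hLeq, integral_const]
    simp only [measure_univ, probReal_univ, ENNReal.toReal_one, smul_eq_mul, mul_one, one_smul, ← hρdef]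
    ring
  have heq2 : ∫ x, (r x + 1)^2 ∂ν = 2 + 2 * ρ := by
    simp_rw [hadd]
    rw [integral_add hiadd (integrable_const 1),
      integral_add hLint (hrint.const_mul 2), integral_const_mul, hLeq, integral_const]
    simp only [measure_univ, probReal_univ, ENNReal.toReal_one, smul_eq_mul, mul_one, one_smul, ← hρdef]
    ring
  -- pointwise AM-GM bound with t = 2 + √3
  have hts : Real.sqrt 3 ^ 2 = 3 := Real.sq_sqrt (by norm_num)
  have hsn : (0:ℝ) ≤ Real.sqrt 3 := Real.sqrt_nonneg 3
  have h2s : Real.sqrt 3 ≤ 2 := by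
    have h4 : Real.sqrt 3 ≤ Real.sqrt 4 := Real.sqrt_le_sqrt (by norm_num)
    rwa [show (4:ℝ) = 2^2 by norm_num, Real.sqrt_sq (by norm_num : (0:ℝ) ≤ 2)] at h4
  have h2s' : (0:ℝ) ≤ 2 + Real.sqrt 3 := by linarith
  clear hgsplit hssplit hgint hsint hgeq hseq hMle hMint hMeq hμsmall hcard
  clear hLmeas hrmeas hρge hexplb hμ2 hA hg hs hL hrx
  have hptb : ∀ x, |L x - 1| ≤
      ((2 + Real.sqrt 3) * (r x - 1)^2 + (2 - Real.sqrt 3) * (r x + 1)^2) / 2 := by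
    intro x
    have h1 : L x - 1 = (r x - 1) * (r x + 1) := by rw [← hr2 x]; ring
    rw [h1, abs_mul, abs_of_nonneg (by linarith [hr0 x] : (0:ℝ) ≤ r x + 1)]
    have hsq : |r x - 1| ^ 2 = (r x - 1) ^ 2 := sq_abs _
    calc |r x - 1| * (r x + 1)
        ≤ ((2 + Real.sqrt 3) * |r x - 1|^2 + (2 - Real.sqrt 3) * (r x + 1)^2)/2 :=
          amgm_aux _ _ _ hts hsn (by linarith [hr0 x])
      _ = ((2 + Real.sqrt 3) * (r x - 1)^2 + (2 - Real.sqrt 3) * (r x + 1)^2)/2 := by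
          rw [hsq]
  have habsint : Integrable (fun x => |L x - 1|) ν := (hLint.sub (integrable_const 1)).abs
  have hbound : ∫ x, |L x - 1| ∂ν ≤
      ((2 + Real.sqrt 3) * (2 - 2 * ρ) + (2 - Real.sqrt 3) * (2 + 2 * ρ)) / 2 := by
    calc ∫ x, |L x - 1| ∂ν
        ≤ ∫ x, ((2 + Real.sqrt 3) * (r x - 1)^2 + (2 - Real.sqrt 3) * (r x + 1)^2) / 2 ∂ν := by
          refine integral_mono habsint ?_ hptb
          exact (((hint1.const_mul _).add (hint2.const_mul _)).div_const 2)
      _ = ((2 + Real.sqrt 3) * (2 - 2 * ρ) + (2 - Real.sqrt 3) * (2 + 2 * ρ)) / 2 := by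
          rw [integral_div, integral_add (hint1.const_mul _) (hint2.const_mul _),
            integral_const_mul, integral_const_mul, heq1, heq2]
  have hfinal : ((2 + Real.sqrt 3) * (2 - 2 * ρ) + (2 - Real.sqrt 3) * (2 + 2 * ρ)) / 2 ≤ 1 := by
    nlinarith [hρsqrt, hts, hsn, mul_le_mul_of_nonneg_left hρsqrt hsn]
  linarith [hbound, hfinal]
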